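/- arXiv:2512.17858 — 7 statements merged into one kernel-verified Lean document; each statement's English description precedes it below -/
import Mathlib

section
/- (Theorem 2, single agent, finite-randomization version: calibrated mechanisms and two-stage mechanisms implement the same outcome distributions.) A function ϑ : A × Θ × Ω → ℝ equals the outcome distribution ϑ_φ of some calibrated-incentive-compatible and calibrated-individually-rational finitely randomized mechanism φ (for some finite set E and randomization weights η) if and only if ϑ equals the outcome distribution of some incentive compatible and individually rational finite two-stage mechanism (M, β, ν, α), i.e. ϑ(a,θ,ω) = μ0 ω · f θ · Σ_{m∈M} β ω m · α θ m a. -/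
open Finset
open scoped Classical

/-- The total probability that the calibrated information structure of the finitely randomized
mechanism `φ` produces the signal (interim allocation rule) `s0`. -/
noncomputable def sigProb {A Θ Ω : Type} [Fintype A] [Fintype Θ] [Fintype Ω] {E : ℕ}
    (μ0 : Ω → ℝ) (η : Fin E → ℝ) (φ : Θ → Ω → Fin E → A → ℝ) (s0 : Θ → A → ℝ) : ℝ :=
  ∑ ω, ∑ ε, if (fun θ a => φ θ ω ε a) = s0 then μ0 ω * η ε else 0

/-- The posterior probability of state `ω` given signal `s0`. -/
noncomputable def sigPost {A Θ Ω : Type} [Fintype A] [Fintype Θ] [Fintype Ω] {E : ℕ}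
    (μ0 : Ω → ℝ) (η : Fin E → ℝ) (φ : Θ → Ω → Fin E → A → ℝ) (s0 : Θ → A → ℝ) (ω : Ω) : ℝ :=
  (∑ ε, if (fun θ a => φ θ ω ε a) = s0 then μ0 ω * η ε else 0) / sigProb μ0 η φ s0

/-- Calibrated incentive compatibility: at every signal of positive probability, truthful
reporting is optimal given the posterior belief. -/
def CalibratedIC {A Θ Ω : Type} [Fintype A] [Fintype Θ] [Fintype Ω] {E : ℕ}
    (μ0 : Ω → ℝ) (η : Fin E → ℝ) (u : A → Θ → Ω → ℝ) (φ : Θ → Ω → Fin E → A → ℝ) : Prop :=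
  ∀ s0 : Θ → A → ℝ, 0 < sigProb μ0 η φ s0 → ∀ θ θ',
    ∑ ω, sigPost μ0 η φ s0 ω * ∑ a, s0 θ a * u a θ ω ≥
      ∑ ω, sigPost μ0 η φ s0 ω * ∑ a, s0 θ' a * u a θ ω

/-- Calibrated individual rationality: at every signal of positive probability, participation
is optimal given the posterior belief. -/
def CalibratedIR {A Θ Ω : Type} [Fintype A] [Fintype Θ] [Fintype Ω] {E : ℕ}
    (μ0 : Ω → ℝ) (η : Fin E → ℝ) (u : A → Θ → Ω → ℝ) (a0 : A)
    (φ : Θ → Ω → Fin E → A → ℝ) : Prop :=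
  ∀ s0 : Θ → A → ℝ, 0 < sigProb μ0 η φ s0 → ∀ θ,
    ∑ ω, sigPost μ0 η φ s0 ω * ∑ a, s0 θ a * u a θ ω ≥
      ∑ ω, sigPost μ0 η φ s0 ω * u a0 θ ω

lemma pi_sum_prod {Ω κ : Type} [Fintype Ω] [Fintype κ] (c : Ω → κ → ℝ) :
    ∑ e : Ω → κ, ∏ ω, c ω (e ω) = ∏ ω, ∑ m, c ω m := by
  classical
  rw [Finset.prod_univ_sum]
  simp [Fintype.piFinset_univ]

lemma key_sum {Ω κ : Type} [Fintype Ω] [Fintype κ]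
    (β : Ω → κ → ℝ) (F : κ → ℝ) (ω : Ω)
    (hβ : ∀ ω', ω' ≠ ω → ∑ m, β ω' m = 1) :
    ∑ e : Ω → κ, (∏ ω', β ω' (e ω')) * F (e ω) = ∑ m, β ω m * F m := by
  classical
  have h1 : ∀ e : Ω → κ, (∏ ω', β ω' (e ω')) * F (e ω)
      = ∏ ω', (β ω' (e ω') * if ω' = ω then F (e ω') else 1) := by
    intro e
    rw [Finset.prod_mul_distrib]
    congr 1
    simp
  calc ∑ e : Ω → κ, (∏ ω', β ω' (e ω')) * F (e ω)
      = ∑ e : Ω → κ, ∏ ω', (β ω' (e ω') * if ω' = ω then F (e ω') else 1) :=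
        Finset.sum_congr rfl fun e _ => h1 e
    _ = ∏ ω', ∑ m, (β ω' m * if ω' = ω then F m else 1) :=
        pi_sum_prod (fun ω' m => β ω' m * if ω' = ω then F m else 1)
    _ = ∑ m, β ω m * F m := by
        rw [Finset.prod_eq_single ω]
        · simp
        · intro ω' _ hne
          simp [hne, hβ ω' hne]
        · simp

/-- Theorem 2 (single agent): an outcome distribution is implementable by a calibrated
(incentive compatible and individually rational) finitely randomized mechanism if and only if
it is implementable by an incentive compatible and individually rational finite two-stage
mechanism. -/
theorem calibrated_iff_twoStage
    {A Θ Ω : Type} [Fintype A] [Fintype Θ] [Fintype Ω]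
    [Nonempty A] [Nonempty Θ] [Nonempty Ω]
    (μ0 : Ω → ℝ) (hμ0 : ∀ ω, 0 ≤ μ0 ω) (hμ0sum : ∑ ω, μ0 ω = 1)
    (f : Θ → ℝ) (hf : ∀ θ, 0 ≤ f θ) (hfsum : ∑ θ, f θ = 1)
    (u : A → Θ → Ω → ℝ) (a0 : A)
    (ϑ : A → Θ → Ω → ℝ) :
    (∃ (E : ℕ) (η : Fin E → ℝ) (φ : Θ → Ω → Fin E → A → ℝ),
        (∀ ε, 0 ≤ η ε) ∧ (∑ ε, η ε = 1) ∧
        (∀ θ ω ε a, 0 ≤ φ θ ω ε a) ∧ (∀ θ ω ε, ∑ a, φ θ ω ε a = 1) ∧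
        CalibratedIC μ0 η u φ ∧ CalibratedIR μ0 η u a0 φ ∧
        (∀ a θ ω, ϑ a θ ω = μ0 ω * f θ * ∑ ε, η ε * φ θ ω ε a))
    ↔
    (∃ (k : ℕ) (β : Ω → Fin k → ℝ) (ν : Fin k → Ω → ℝ) (α : Θ → Fin k → A → ℝ),
        (∀ ω m, 0 ≤ β ω m) ∧ (∀ ω, ∑ m, β ω m = 1) ∧
        (∀ m ω, 0 ≤ ν m ω) ∧ (∀ m, ∑ ω, ν m ω = 1) ∧
        (∀ m ω, ν m ω * (∑ ω', μ0 ω' * β ω' m) = μ0 ω * β ω m) ∧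
        (∀ θ m a, 0 ≤ α θ m a) ∧ (∀ θ m, ∑ a, α θ m a = 1) ∧
        (∀ m, 0 < (∑ ω', μ0 ω' * β ω' m) → ∀ θ θ',
          ∑ ω, ν m ω * ∑ a, α θ m a * u a θ ω ≥
            ∑ ω, ν m ω * ∑ a, α θ' m a * u a θ ω) ∧
        (∀ m, 0 < (∑ ω', μ0 ω' * β ω' m) → ∀ θ,
          ∑ ω, ν m ω * ∑ a, α θ m a * u a θ ω ≥ ∑ ω, ν m ω * u a0 θ ω) ∧
        (∀ a θ ω, ϑ a θ ω = μ0 ω * f θ * ∑ m, β ω m * α θ m a)) := by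
  constructor
  · -- forward: from calibrated mechanism to two-stage mechanism
    rintro ⟨E, η, φ, hη, hηsum, hφ, hφsum, hIC, hIR, hϑ⟩
    classical
    set S : Finset (Θ → A → ℝ) :=
      Finset.image (fun p : Ω × Fin E => fun θ a => φ θ p.1 p.2 a) Finset.univ with hSdef
    have hsig_mem : ∀ (ω : Ω) (ε : Fin E), (fun θ a => φ θ ω ε a) ∈ S := by
      intro ω ε
      rw [hSdef]
      exact Finset.mem_image.mpr ⟨(ω, ε), Finset.mem_univ _, rfl⟩
    set L : Fin S.card → (Θ → A → ℝ) := fun m => (S.equivFin.symm m : Θ → A → ℝ) with hLdef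
    have hLmem : ∀ m, L m ∈ S := fun m => (S.equivFin.symm m).2
    have hLval : ∀ (x : Θ → A → ℝ) (hx : x ∈ S), L (S.equivFin ⟨x, hx⟩) = x := by
      intro x hx
      simp [hLdef]
    have hLuniq : ∀ (x : Θ → A → ℝ) (hx : x ∈ S) (m : Fin S.card),
        x = L m → m = S.equivFin ⟨x, hx⟩ := by
      intro x hx m h
      have h2 : S.equivFin.symm m = ⟨x, hx⟩ := Subtype.ext (by rw [hLdef] at h; exact h.symm)
      calc m = S.equivFin (S.equivFin.symm m) := (Equiv.apply_symm_apply _ _).symm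
        _ = S.equivFin ⟨x, hx⟩ := by rw [h2]
    have hsum_uniq : ∀ (x : Θ → A → ℝ) (hx : x ∈ S) (t : Fin S.card → ℝ),
        (∑ m, if x = L m then t m else 0) = t (S.equivFin ⟨x, hx⟩) := by
      intro x hx t
      rw [Finset.sum_eq_single (S.equivFin ⟨x, hx⟩)]
      · rw [if_pos (hLval x hx).symm]
      · intro m _ hm
        exact if_neg (fun h => hm (hLuniq x hx m h))
      · intro h
        exact absurd (Finset.mem_univ _) h
    have hst : ∀ (m : Fin S.card) (ω' : Ω),
        μ0 ω' * (∑ ε, if (fun θ a => φ θ ω' ε a) = L m then η ε else 0)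
          = ∑ ε, if (fun θ a => φ θ ω' ε a) = L m then μ0 ω' * η ε else 0 := by
      intro m ω'
      rw [Finset.mul_sum]
      exact Finset.sum_congr rfl fun ε _ => by split <;> ring
    have hPm : ∀ m : Fin S.card,
        (∑ ω', μ0 ω' * ∑ ε, if (fun θ a => φ θ ω' ε a) = L m then η ε else 0)
          = sigProb μ0 η φ (L m) := by
      intro m
      unfold sigProb
      exact Finset.sum_congr rfl fun ω' _ => hst m ω'
    refine ⟨S.card,
      fun ω m => ∑ ε, if (fun θ a => φ θ ω ε a) = L m then η ε else 0,
      fun m ω => if 0 < sigProb μ0 η φ (L m) then sigPost μ0 η φ (L m) ω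
        else if ω = Classical.arbitrary Ω then 1 else 0,
      fun θ m a => L m θ a, ?_, ?_, ?_, ?_, ?_, ?_, ?_, ?_, ?_, ?_⟩
    · -- β nonneg
      intro ω m
      apply Finset.sum_nonneg
      intro ε _
      split
      · exact hη ε
      · exact le_refl 0
    · -- β row sums
      intro ω
      show (∑ m, ∑ ε, if (fun θ a => φ θ ω ε a) = L m then η ε else 0) = 1
      rw [Finset.sum_comm]
      calc (∑ ε, ∑ m, if (fun θ a => φ θ ω ε a) = L m then η ε else 0)
          = ∑ ε, η ε :=
            Finset.sum_congr rfl fun ε _ => hsum_uniq _ (hsig_mem ω ε) (fun _ => η ε)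
        _ = 1 := hηsum
    · -- ν nonneg
      intro m ω
      show (0:ℝ) ≤ if 0 < sigProb μ0 η φ (L m) then sigPost μ0 η φ (L m) ω
        else if ω = Classical.arbitrary Ω then 1 else 0
      split
      · next h =>
        unfold sigPost
        apply div_nonneg _ h.le
        apply Finset.sum_nonneg
        intro ε _
        split
        · exact mul_nonneg (hμ0 ω) (hη ε)
        · exact le_refl 0
      · split <;> norm_num
    · -- ν sums to one
      intro m
      show (∑ ω, if 0 < sigProb μ0 η φ (L m) then sigPost μ0 η φ (L m) ω
        else if ω = Classical.arbitrary Ω then 1 else 0) = 1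
      by_cases h : 0 < sigProb μ0 η φ (L m)
      · simp only [if_pos h]
        have h1 : ∑ ω, sigPost μ0 η φ (L m) ω
            = (∑ ω, ∑ ε, if (fun θ a => φ θ ω ε a) = L m then μ0 ω * η ε else 0)
              / sigProb μ0 η φ (L m) := by
          unfold sigPost
          rw [Finset.sum_div]
        have h2 : (∑ ω, ∑ ε, if (fun θ a => φ θ ω ε a) = L m then μ0 ω * η ε else 0)
            = sigProb μ0 η φ (L m) := rfl
        rw [h1, h2, div_self (ne_of_gt h)]
      · simp only [if_neg h]
        simp
    · -- Bayes consistency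
      intro m ω
      show (if 0 < sigProb μ0 η φ (L m) then sigPost μ0 η φ (L m) ω
          else if ω = Classical.arbitrary Ω then 1 else 0)
          * (∑ ω', μ0 ω' * ∑ ε, if (fun θ a => φ θ ω' ε a) = L m then η ε else 0)
        = μ0 ω * ∑ ε, if (fun θ a => φ θ ω ε a) = L m then η ε else 0
      rw [hPm m]
      by_cases h : 0 < sigProb μ0 η φ (L m)
      · rw [if_pos h]
        unfold sigPost
        rw [div_mul_cancel₀ _ (ne_of_gt h)]
        exact (hst m ω).symm
      · rw [if_neg h]
        have hP0 : sigProb μ0 η φ (L m) = 0 := by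
          have hnn : (0:ℝ) ≤ sigProb μ0 η φ (L m) := by
            rw [← hPm m]
            apply Finset.sum_nonneg
            intro ω' _
            refine mul_nonneg (hμ0 ω') (Finset.sum_nonneg fun ε _ => ?_)
            split
            · exact hη ε
            · exact le_refl 0
          exact le_antisymm (not_lt.mp h) hnn
        rw [hP0, mul_zero]
        have hterm : ∀ ω' ∈ Finset.univ,
            (0:ℝ) ≤ μ0 ω' * ∑ ε, if (fun θ a => φ θ ω' ε a) = L m then η ε else 0 := by
          intro ω' _
          refine mul_nonneg (hμ0 ω') (Finset.sum_nonneg fun ε _ => ?_)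
          split
          · exact hη ε
          · exact le_refl 0
        have := (Finset.sum_eq_zero_iff_of_nonneg hterm).mp (by rw [hPm m]; exact hP0)
          ω (Finset.mem_univ ω)
        exact this.symm
    · -- α nonneg
      intro θ m a
      obtain ⟨p, -, hp⟩ := Finset.mem_image.mp (hLmem m)
      have h := (congrFun (congrFun hp θ) a : φ θ p.1 p.2 a = L m θ a)
      show (0:ℝ) ≤ L m θ a
      rw [← h]
      exact hφ θ p.1 p.2 a
    · -- α sums to one
      intro θ m
      obtain ⟨p, -, hp⟩ := Finset.mem_image.mp (hLmem m)
      show (∑ a, L m θ a) = 1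
      calc (∑ a, L m θ a) = ∑ a, φ θ p.1 p.2 a :=
            Finset.sum_congr rfl fun a _ => (congrFun (congrFun hp θ) a).symm
        _ = 1 := hφsum θ p.1 p.2
    · -- IC
      intro m hpos θ θ'
      rw [hPm m] at hpos
      show (∑ ω, (if 0 < sigProb μ0 η φ (L m) then sigPost μ0 η φ (L m) ω
          else if ω = Classical.arbitrary Ω then 1 else 0) * ∑ a, L m θ a * u a θ ω)
        ≥ ∑ ω, (if 0 < sigProb μ0 η φ (L m) then sigPost μ0 η φ (L m) ω
          else if ω = Classical.arbitrary Ω then 1 else 0) * ∑ a, L m θ' a * u a θ ω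
      simp only [if_pos hpos]
      exact hIC (L m) hpos θ θ'
    · -- IR
      intro m hpos θ
      rw [hPm m] at hpos
      show (∑ ω, (if 0 < sigProb μ0 η φ (L m) then sigPost μ0 η φ (L m) ω
          else if ω = Classical.arbitrary Ω then 1 else 0) * ∑ a, L m θ a * u a θ ω)
        ≥ ∑ ω, (if 0 < sigProb μ0 η φ (L m) then sigPost μ0 η φ (L m) ω
          else if ω = Classical.arbitrary Ω then 1 else 0) * u a0 θ ω
      simp only [if_pos hpos]
      exact hIR (L m) hpos θ
    · -- outcome distribution
      intro a θ ω
      rw [hϑ a θ ω]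
      congr 1
      have hm : ∀ m : Fin S.card,
          (∑ ε, if (fun θ' a' => φ θ' ω ε a') = L m then η ε else 0) * L m θ a
            = ∑ ε, if (fun θ' a' => φ θ' ω ε a') = L m then η ε * φ θ ω ε a else 0 := by
        intro m
        rw [Finset.sum_mul]
        refine Finset.sum_congr rfl fun ε _ => ?_
        by_cases h : (fun θ' a' => φ θ' ω ε a') = L m
        · rw [if_pos h, if_pos h]
          have h2 : L m θ a = φ θ ω ε a := (congrFun (congrFun h θ) a).symm
          rw [h2]
        · rw [if_neg h, if_neg h, zero_mul]
      calc (∑ ε, η ε * φ θ ω ε a)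
          = ∑ ε, ∑ m, if (fun θ' a' => φ θ' ω ε a') = L m then η ε * φ θ ω ε a else 0 :=
            (Finset.sum_congr rfl fun ε _ =>
              (hsum_uniq _ (hsig_mem ω ε) (fun _ => η ε * φ θ ω ε a)).symm)
        _ = ∑ m, ∑ ε, if (fun θ' a' => φ θ' ω ε a') = L m then η ε * φ θ ω ε a else 0 :=
            Finset.sum_comm
        _ = ∑ m, (∑ ε, if (fun θ' a' => φ θ' ω ε a') = L m then η ε else 0) * L m θ a :=
            Finset.sum_congr rfl fun m _ => (hm m).symm
  · -- backward: from two-stage mechanism to calibrated mechanism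
    rintro ⟨k, β, ν, α, hβ, hβsum, hν, hνsum, hBayes, hα, hαsum, hIC, hIR, hϑ⟩
    classical
    set g : (Ω → Fin k) ≃ Fin (Fintype.card (Ω → Fin k)) := Fintype.equivFin _ with hg
    have hkey : ∀ (ω : Ω) (F : Fin k → ℝ),
        (∑ ε, (∏ ω', β ω' (g.symm ε ω')) * F (g.symm ε ω)) = ∑ m, β ω m * F m := by
      intro ω F
      calc (∑ ε, (∏ ω', β ω' (g.symm ε ω')) * F (g.symm ε ω))
          = ∑ e : Ω → Fin k, (∏ ω', β ω' (e ω')) * F (e ω) :=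
            Equiv.sum_comp g.symm (fun e => (∏ ω', β ω' (e ω')) * F (e ω))
        _ = ∑ m, β ω m * F m := key_sum β F ω (fun ω' _ => hβsum ω')
    have hnum : ∀ (s0 : Θ → A → ℝ) (ω : Ω),
        (∑ ε, if (fun (θ : Θ) (a : A) => α θ (g.symm ε ω) a) = s0
            then μ0 ω * ∏ ω', β ω' (g.symm ε ω') else 0)
          = μ0 ω * ∑ m ∈ Finset.univ.filter (fun m => (fun (θ : Θ) (a : A) => α θ m a) = s0),
              β ω m := by
      intro s0 ω
      calc (∑ ε, if (fun (θ : Θ) (a : A) => α θ (g.symm ε ω) a) = s0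
              then μ0 ω * ∏ ω', β ω' (g.symm ε ω') else 0)
          = ∑ ε, μ0 ω * ((∏ ω', β ω' (g.symm ε ω'))
              * (if (fun (θ : Θ) (a : A) => α θ (g.symm ε ω) a) = s0 then 1 else 0)) :=
            Finset.sum_congr rfl fun ε _ => by split <;> ring
        _ = μ0 ω * ∑ ε, (∏ ω', β ω' (g.symm ε ω'))
              * (if (fun (θ : Θ) (a : A) => α θ (g.symm ε ω) a) = s0 then 1 else 0) :=
            (Finset.mul_sum _ _ _).symm
        _ = μ0 ω * ∑ m, β ω m * (if (fun (θ : Θ) (a : A) => α θ m a) = s0 then 1 else 0) := by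
            rw [hkey ω (fun m => if (fun (θ : Θ) (a : A) => α θ m a) = s0 then 1 else 0)]
        _ = μ0 ω * ∑ m ∈ Finset.univ.filter
              (fun m => (fun (θ : Θ) (a : A) => α θ m a) = s0), β ω m := by
            congr 1
            rw [Finset.sum_filter]
            refine Finset.sum_congr rfl fun m _ => ?_
            by_cases h : (fun (θ : Θ) (a : A) => α θ m a) = s0 <;> simp [h]
    have hP : ∀ s0 : Θ → A → ℝ,
        sigProb μ0 (fun ε => ∏ ω', β ω' (g.symm ε ω'))
          (fun θ ω ε a => α θ (g.symm ε ω) a) s0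
          = ∑ m ∈ Finset.univ.filter (fun m => (fun (θ : Θ) (a : A) => α θ m a) = s0),
              ∑ ω, μ0 ω * β ω m := by
      intro s0
      have h0 : sigProb μ0 (fun ε => ∏ ω', β ω' (g.symm ε ω'))
          (fun θ ω ε a => α θ (g.symm ε ω) a) s0
          = ∑ ω, ∑ ε, if (fun (θ : Θ) (a : A) => α θ (g.symm ε ω) a) = s0
              then μ0 ω * ∏ ω', β ω' (g.symm ε ω') else 0 := rfl
      rw [h0]
      calc (∑ ω, ∑ ε, if (fun (θ : Θ) (a : A) => α θ (g.symm ε ω) a) = s0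
              then μ0 ω * ∏ ω', β ω' (g.symm ε ω') else 0)
          = ∑ ω, μ0 ω * ∑ m ∈ Finset.univ.filter
              (fun m => (fun (θ : Θ) (a : A) => α θ m a) = s0), β ω m :=
            Finset.sum_congr rfl fun ω _ => hnum s0 ω
        _ = ∑ ω, ∑ m ∈ Finset.univ.filter
              (fun m => (fun (θ : Θ) (a : A) => α θ m a) = s0), μ0 ω * β ω m :=
            Finset.sum_congr rfl fun ω _ => Finset.mul_sum _ _ _
        _ = ∑ m ∈ Finset.univ.filter (fun m => (fun (θ : Θ) (a : A) => α θ m a) = s0),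
              ∑ ω, μ0 ω * β ω m := Finset.sum_comm
    have hpostEq : ∀ (s0 : Θ → A → ℝ) (ω : Ω),
        sigPost μ0 (fun ε => ∏ ω', β ω' (g.symm ε ω'))
          (fun θ ω ε a => α θ (g.symm ε ω) a) s0 ω
          = (μ0 ω * ∑ m ∈ Finset.univ.filter
              (fun m => (fun (θ : Θ) (a : A) => α θ m a) = s0), β ω m)
            / sigProb μ0 (fun ε => ∏ ω', β ω' (g.symm ε ω'))
                (fun θ ω ε a => α θ (g.symm ε ω) a) s0 := by
      intro s0 ω
      have h0 : sigPost μ0 (fun ε => ∏ ω', β ω' (g.symm ε ω'))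
          (fun θ ω ε a => α θ (g.symm ε ω) a) s0 ω
          = (∑ ε, if (fun (θ : Θ) (a : A) => α θ (g.symm ε ω) a) = s0
              then μ0 ω * ∏ ω', β ω' (g.symm ε ω') else 0)
            / sigProb μ0 (fun ε => ∏ ω', β ω' (g.symm ε ω'))
                (fun θ ω ε a => α θ (g.symm ε ω) a) s0 := rfl
      rw [h0, hnum s0 ω]
    refine ⟨Fintype.card (Ω → Fin k),
      fun ε => ∏ ω', β ω' (g.symm ε ω'),
      fun θ ω ε a => α θ (g.symm ε ω) a,
      fun ε => Finset.prod_nonneg fun ω' _ => hβ ω' _, ?_,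
      fun θ ω ε a => hα θ _ a, fun θ ω ε => hαsum θ _, ?_, ?_, ?_⟩
    · -- η sums to one
      show (∑ ε, ∏ ω', β ω' (g.symm ε ω')) = 1
      calc (∑ ε, ∏ ω', β ω' (g.symm ε ω'))
          = ∑ e : Ω → Fin k, ∏ ω', β ω' (e ω') :=
            Equiv.sum_comp g.symm (fun e => ∏ ω', β ω' (e ω'))
        _ = ∏ ω', ∑ m, β ω' m := pi_sum_prod β
        _ = 1 := by simp [hβsum]
    · -- calibrated IC
      intro s0 hpos θ θ'
      set M0 : Finset (Fin k) :=
        Finset.univ.filter (fun m => (fun (θ : Θ) (a : A) => α θ m a) = s0) with hM0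
      set P : ℝ := sigProb μ0 (fun ε => ∏ ω', β ω' (g.symm ε ω'))
        (fun θ ω ε a => α θ (g.symm ε ω) a) s0 with hPdef
      have hE' : ∀ Y : Ω → ℝ,
          (∑ ω, (μ0 ω * ∑ m ∈ M0, β ω m) * Y ω)
            = ∑ m ∈ M0, (∑ ω', μ0 ω' * β ω' m) * (∑ ω, ν m ω * Y ω) := by
        intro Y
        calc (∑ ω, (μ0 ω * ∑ m ∈ M0, β ω m) * Y ω)
            = ∑ ω, ∑ m ∈ M0, (μ0 ω * β ω m) * Y ω :=
              Finset.sum_congr rfl fun ω _ => by rw [Finset.mul_sum, Finset.sum_mul]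
          _ = ∑ m ∈ M0, ∑ ω, (μ0 ω * β ω m) * Y ω := Finset.sum_comm
          _ = ∑ m ∈ M0, (∑ ω', μ0 ω' * β ω' m) * (∑ ω, ν m ω * Y ω) := by
              refine Finset.sum_congr rfl fun m _ => ?_
              rw [Finset.mul_sum]
              exact Finset.sum_congr rfl fun ω _ => by rw [← hBayes m ω]; ring
      have hdiv : ∀ X : Ω → ℝ,
          (∑ ω, ((μ0 ω * ∑ m ∈ M0, β ω m) / P) * X ω)
            = (∑ ω, (μ0 ω * ∑ m ∈ M0, β ω m) * X ω) / P := by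
        intro X
        rw [Finset.sum_div]
        exact Finset.sum_congr rfl fun ω _ => div_mul_eq_mul_div _ _ _
      have hs0 : ∀ m ∈ M0, ∀ (τ : Θ) (a : A), s0 τ a = α τ m a := by
        intro m hm τ a
        have h := (Finset.mem_filter.mp hm).2
        exact (congrFun (congrFun h τ) a).symm
      have hpm_nonneg : ∀ m : Fin k, (0:ℝ) ≤ ∑ ω', μ0 ω' * β ω' m :=
        fun m => Finset.sum_nonneg fun ω' _ => mul_nonneg (hμ0 ω') (hβ ω' m)
      rw [ge_iff_le]
      simp only [hpostEq s0]
      rw [hdiv (fun ω => ∑ a, s0 θ a * u a θ ω), hdiv (fun ω => ∑ a, s0 θ' a * u a θ ω)]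
      rw [div_le_div_iff_of_pos_right hpos]
      rw [hE' (fun ω => ∑ a, s0 θ a * u a θ ω), hE' (fun ω => ∑ a, s0 θ' a * u a θ ω)]
      refine Finset.sum_le_sum fun m hm => ?_
      rcases (hpm_nonneg m).lt_or_eq with h | h
      · refine mul_le_mul_of_nonneg_left ?_ (hpm_nonneg m)
        have h1 : ∀ τ : Θ, (∑ ω, ν m ω * ∑ a, s0 τ a * u a θ ω)
            = ∑ ω, ν m ω * ∑ a, α τ m a * u a θ ω := by
          intro τ
          refine Finset.sum_congr rfl fun ω _ => ?_
          congr 1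
          exact Finset.sum_congr rfl fun a _ => by rw [hs0 m hm τ a]
        rw [h1 θ, h1 θ']
        exact hIC m h θ θ'
      · rw [← h]
        simp
    · -- calibrated IR
      intro s0 hpos θ
      set M0 : Finset (Fin k) :=
        Finset.univ.filter (fun m => (fun (θ : Θ) (a : A) => α θ m a) = s0) with hM0
      set P : ℝ := sigProb μ0 (fun ε => ∏ ω', β ω' (g.symm ε ω'))
        (fun θ ω ε a => α θ (g.symm ε ω) a) s0 with hPdef
      have hE' : ∀ Y : Ω → ℝ,
          (∑ ω, (μ0 ω * ∑ m ∈ M0, β ω m) * Y ω)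
            = ∑ m ∈ M0, (∑ ω', μ0 ω' * β ω' m) * (∑ ω, ν m ω * Y ω) := by
        intro Y
        calc (∑ ω, (μ0 ω * ∑ m ∈ M0, β ω m) * Y ω)
            = ∑ ω, ∑ m ∈ M0, (μ0 ω * β ω m) * Y ω :=
              Finset.sum_congr rfl fun ω _ => by rw [Finset.mul_sum, Finset.sum_mul]
          _ = ∑ m ∈ M0, ∑ ω, (μ0 ω * β ω m) * Y ω := Finset.sum_comm
          _ = ∑ m ∈ M0, (∑ ω', μ0 ω' * β ω' m) * (∑ ω, ν m ω * Y ω) := by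
              refine Finset.sum_congr rfl fun m _ => ?_
              rw [Finset.mul_sum]
              exact Finset.sum_congr rfl fun ω _ => by rw [← hBayes m ω]; ring
      have hdiv : ∀ X : Ω → ℝ,
          (∑ ω, ((μ0 ω * ∑ m ∈ M0, β ω m) / P) * X ω)
            = (∑ ω, (μ0 ω * ∑ m ∈ M0, β ω m) * X ω) / P := by
        intro X
        rw [Finset.sum_div]
        exact Finset.sum_congr rfl fun ω _ => div_mul_eq_mul_div _ _ _
      have hs0 : ∀ m ∈ M0, ∀ (τ : Θ) (a : A), s0 τ a = α τ m a := by
        intro m hm τ a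
        have h := (Finset.mem_filter.mp hm).2
        exact (congrFun (congrFun h τ) a).symm
      have hpm_nonneg : ∀ m : Fin k, (0:ℝ) ≤ ∑ ω', μ0 ω' * β ω' m :=
        fun m => Finset.sum_nonneg fun ω' _ => mul_nonneg (hμ0 ω') (hβ ω' m)
      rw [ge_iff_le]
      simp only [hpostEq s0]
      rw [hdiv (fun ω => ∑ a, s0 θ a * u a θ ω), hdiv (fun ω => u a0 θ ω)]
      rw [div_le_div_iff_of_pos_right hpos]
      rw [hE' (fun ω => ∑ a, s0 θ a * u a θ ω), hE' (fun ω => u a0 θ ω)]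
      refine Finset.sum_le_sum fun m hm => ?_
      rcases (hpm_nonneg m).lt_or_eq with h | h
      · refine mul_le_mul_of_nonneg_left ?_ (hpm_nonneg m)
        have h1 : (∑ ω, ν m ω * ∑ a, s0 θ a * u a θ ω)
            = ∑ ω, ν m ω * ∑ a, α θ m a * u a θ ω := by
          refine Finset.sum_congr rfl fun ω _ => ?_
          congr 1
          exact Finset.sum_congr rfl fun a _ => by rw [hs0 m hm θ a]
        rw [h1]
        exact hIR m h θ
      · rw [← h]
        simp
    · -- outcome distribution
      intro a θ ω
      rw [hϑ a θ ω]
      congr 1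
      show (∑ m, β ω m * α θ m a) = ∑ ε, (∏ ω', β ω' (g.symm ε ω')) * α θ (g.symm ε ω) a
      exact (hkey ω (fun m => α θ m a)).symm
end

section
/- (Lemma 'martingale property under weak* convergence'.) For P-almost every x ∈ X, the probability measures κ_t x converge to κ_∞ x in the topology of weak convergence of probability measures on Y as t → ∞. That is, conditional distributions of Z given a filtration converge weak* almost surely to the conditional distribution given the limit σ-algebra. -/
open MeasureTheory Filter Topology

/-- Martingale property under weak* convergence: if `κ t x` is (a version of) the conditional
distribution of `Z` given `ℱ t`, and `κlim x` is a version of the conditional distribution of `Z`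
given `ℱ∞ = ⨆ t, ℱ t`, then for `P`-almost every `x` the probability measures `κ t x` converge
weakly to `κlim x`. -/
theorem conditional_distributions_converge_weakStar
    {X : Type*} [mX : MeasurableSpace X] (P : Measure X) [IsProbabilityMeasure P]
    (ℱ : Filtration ℕ mX)
    {Y : Type*} [MetricSpace Y] [CompactSpace Y] [MeasurableSpace Y] [BorelSpace Y]
    (Z : X → Y) (hZ : Measurable Z)
    (κ : ℕ → X → ProbabilityMeasure Y) (κlim : X → ProbabilityMeasure Y)
    (hint : ∀ (g : Y → ℝ), Continuous g → ∀ t : ℕ,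
      Integrable (fun x => ∫ y, g y ∂(κ t x : Measure Y)) P)
    (hintLim : ∀ (g : Y → ℝ), Continuous g →
      Integrable (fun x => ∫ y, g y ∂(κlim x : Measure Y)) P)
    (hcond : ∀ (g : Y → ℝ), Continuous g → ∀ t : ℕ,
      (fun x => ∫ y, g y ∂(κ t x : Measure Y)) =ᵐ[P] P[(fun x => g (Z x)) | ℱ t])
    (hcondLim : ∀ (g : Y → ℝ), Continuous g →
      (fun x => ∫ y, g y ∂(κlim x : Measure Y)) =ᵐ[P]
        P[(fun x => g (Z x)) | ⨆ t, (ℱ t : MeasurableSpace X)]) :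
    ∀ᵐ x ∂P, Tendsto (fun t => κ t x) atTop (𝓝 (κlim x)) := by
  obtain ⟨S, hScount, hSdense⟩ := TopologicalSpace.exists_countable_dense C(Y, ℝ)
  have key : ∀ g ∈ S, ∀ᵐ x ∂P,
      Tendsto (fun t => ∫ y, g y ∂(κ t x : Measure Y)) atTop
        (𝓝 (∫ y, g y ∂(κlim x : Measure Y))) := by
    intro g hg
    have hlevy := MeasureTheory.tendsto_ae_condExp (μ := P) (ℱ := ℱ) (fun x => g (Z x))
    have h1 : ∀ᵐ x ∂P, ∀ t : ℕ,
        ∫ y, g y ∂(κ t x : Measure Y) = (P[(fun x => g (Z x)) | ℱ t]) x :=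
      ae_all_iff.2 fun t => hcond g g.continuous t
    filter_upwards [hlevy, h1, hcondLim g g.continuous] with x hx h1x h2x
    rw [h2x]
    exact hx.congr fun t => (h1x t).symm
  rw [← ae_ball_iff hScount] at key
  filter_upwards [key] with x hx
  rw [ProbabilityMeasure.tendsto_iff_forall_integral_tendsto]
  intro f
  rw [Metric.tendsto_atTop]
  intro ε hε
  obtain ⟨g, hgS, hgd⟩ := hSdense.exists_dist_lt f.toContinuousMap
    (show (0:ℝ) < ε/4 by linarith)
  have hbound : ∀ (μ : ProbabilityMeasure Y),
      dist (∫ y, f y ∂(μ : Measure Y)) (∫ y, g y ∂(μ : Measure Y)) ≤ ε/4 := by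
    intro μ
    have hgint : Integrable (fun y => g y) (μ : Measure Y) :=
      (BoundedContinuousFunction.mkOfCompact g).integrable _
    rw [dist_eq_norm, ← integral_sub (f.integrable _) hgint]
    have := norm_integral_le_of_norm_le_const (μ := (μ : Measure Y))
      (f := fun y => f y - g y) (C := ε/4) ?_
    · simpa using this
    · filter_upwards with y
      have h1 : dist (f.toContinuousMap y) (g y) ≤ dist f.toContinuousMap g :=
        ContinuousMap.dist_apply_le_dist y
      have : dist (f y) (g y) < ε/4 := lt_of_le_of_lt h1 hgd
      rw [Real.norm_eq_abs, ← Real.dist_eq]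
      exact this.le
  have hmid := Metric.tendsto_atTop.1 (hx g hgS) (ε/4) (by linarith)
  obtain ⟨N, hN⟩ := hmid
  refine ⟨N, fun t ht => ?_⟩
  calc dist (∫ y, f y ∂(κ t x : Measure Y)) (∫ y, f y ∂(κlim x : Measure Y))
      ≤ dist (∫ y, f y ∂(κ t x : Measure Y)) (∫ y, g y ∂(κ t x : Measure Y))
        + dist (∫ y, g y ∂(κ t x : Measure Y)) (∫ y, g y ∂(κlim x : Measure Y))
        + dist (∫ y, g y ∂(κlim x : Measure Y)) (∫ y, f y ∂(κlim x : Measure Y)) :=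
        dist_triangle4 _ _ _ _
    _ < ε := by
        have h1 := hbound (κ t x)
        have h2 := hN t ht
        have h3 := hbound (κlim x)
        rw [dist_comm] at h3
        linarith
end

section
/- (Proposition that the two extended occupation measures have the same subsequential limits, concrete form.) Define, for T ≥ 1, the Borel probability measures on K × M: ν_T^1 := (1/T) Σ_{t=1}^{T} P.map (x ↦ (Y_t x, μ_t x)) and ν_T^2 := (1/T) Σ_{t=1}^{T} P.map (x ↦ (Y_t x, μ_{t+1} x)). Then (i) for every continuous g : K × M → ℝ, ∫ g dν_T^1 − ∫ g dν_T^2 → 0 as T → ∞; and (ii) the two sequences have the same weak subsequential limits: for every strictly increasing sequence (T_n) of positive integers and every Borel probability measure ν̄ on K × M, ν^1_{T_n} converges weakly to ν̄ if and only if ν^2_{T_n} converges weakly to ν̄. -/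
open MeasureTheory Filter Topology Finset
open scoped ENNReal

/-- The Cesàro-average occupation measure `(1/T) ∑_{t=1}^{T} P.map (F t)`. -/
noncomputable def cesaroOccupation {X Z : Type*} [MeasurableSpace X] [MeasurableSpace Z]
    (P : Measure X) (F : ℕ → X → Z) (T : ℕ) : Measure Z :=
  (T : ℝ≥0∞)⁻¹ • ∑ t ∈ Finset.Icc 1 T, Measure.map (F t) P

/-- The two extended occupation measures
`ν_T^1 := (1/T) ∑_{t=1}^T P.map (x ↦ (Y t x, μ t x))` (beliefs at the beginning of the period)
and `ν_T^2 := (1/T) ∑_{t=1}^T P.map (x ↦ (Y t x, μ (t+1) x))` (beliefs at the end of the period)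
are asymptotically equivalent: (i) the integrals of any continuous function against them differ
by a quantity vanishing as `T → ∞`, and (ii) along any strictly increasing sequence of positive
integers, they have the same weak subsequential limits. -/
theorem extended_occupation_same_limits
    {X : Type*} [MeasurableSpace X] (P : Measure X) [IsProbabilityMeasure P]
    {K : Type*} [MetricSpace K] [CompactSpace K] [MeasurableSpace K] [BorelSpace K]
    {M : Type*} [MetricSpace M] [CompactSpace M] [MeasurableSpace M] [BorelSpace M]
    (Y : ℕ → X → K) (hY : ∀ t, Measurable (Y t))
    (μs : ℕ → X → M) (μlim : X → M)
    (hμs : ∀ t, Measurable (μs t)) (hμlim : Measurable μlim)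
    (hconv : ∀ᵐ x ∂P, Tendsto (fun t => μs t x) atTop (𝓝 (μlim x))) :
    (∀ g : K × M → ℝ, Continuous g →
      Tendsto (fun T : ℕ =>
          (∫ z, g z ∂(cesaroOccupation P (fun t x => (Y t x, μs t x)) T)) -
            ∫ z, g z ∂(cesaroOccupation P (fun t x => (Y t x, μs (t + 1) x)) T))
        atTop (𝓝 0)) ∧
    (∀ Tn : ℕ → ℕ, StrictMono Tn → (∀ n, 0 < Tn n) →
      ∀ νbar : Measure (K × M), IsProbabilityMeasure νbar →
        ((∀ g : K × M → ℝ, Continuous g →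
            Tendsto (fun n =>
                ∫ z, g z ∂(cesaroOccupation P (fun t x => (Y t x, μs t x)) (Tn n)))
              atTop (𝓝 (∫ z, g z ∂νbar)))
          ↔
          (∀ g : K × M → ℝ, Continuous g →
            Tendsto (fun n =>
                ∫ z, g z ∂(cesaroOccupation P (fun t x => (Y t x, μs (t + 1) x)) (Tn n)))
              atTop (𝓝 (∫ z, g z ∂νbar))))) := by
  
  set F1 : ℕ → X → K × M := fun t x => (Y t x, μs t x) with hF1
  set F2 : ℕ → X → K × M := fun t x => (Y t x, μs (t + 1) x) with hF2
  have hmF1 : ∀ t, Measurable (F1 t) := fun t => (hY t).prodMk (hμs t)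
  have hmF2 : ∀ t, Measurable (F2 t) := fun t => (hY t).prodMk (hμs (t + 1))
  -- integral against a Cesàro occupation measure
  have hint : ∀ (F : ℕ → X → K × M), (∀ t, Measurable (F t)) → ∀ g : K × M → ℝ,
      Continuous g → ∀ T : ℕ,
      ∫ z, g z ∂(cesaroOccupation P F T)
        = (T : ℝ)⁻¹ * ∑ t ∈ Finset.Icc 1 T, ∫ x, g (F t x) ∂P := by
    intro F hF g hg T
    have hintg : ∀ t, Integrable g (Measure.map (F t) P) := fun t => by
      have : IsProbabilityMeasure (Measure.map (F t) P) :=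
        Measure.isProbabilityMeasure_map (hF t).aemeasurable
      exact (BoundedContinuousFunction.mkOfCompact ⟨g, hg⟩).integrable _
    rw [cesaroOccupation, integral_smul_measure, integral_finset_sum_measure (fun t _ => hintg t)]
    simp only [ENNReal.toReal_inv, ENNReal.toReal_natCast, smul_eq_mul]
    congr 1
    exact Finset.sum_congr rfl fun t _ => integral_map (hF t).aemeasurable hg.aestronglyMeasurable
  -- part (i)
  have key : ∀ g : K × M → ℝ, Continuous g →
      Tendsto (fun T : ℕ =>
          (∫ z, g z ∂(cesaroOccupation P F1 T)) - ∫ z, g z ∂(cesaroOccupation P F2 T))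
        atTop (𝓝 0) := by
    intro g hg
    set gb := BoundedContinuousFunction.mkOfCompact ⟨g, hg⟩ with hgb
    have hgint : ∀ (F : X → K × M), Measurable F → Integrable (fun x => g (F x)) P := by
      intro F hF
      have : IsProbabilityMeasure (Measure.map F P) := Measure.isProbabilityMeasure_map hF.aemeasurable
      exact (integrable_map_measure hg.aestronglyMeasurable hF.aemeasurable).mp (gb.integrable _)
    set u : ℕ → ℝ := fun t => ∫ x, (g (F1 t x) - g (F2 t x)) ∂P with hu
    -- u tends to 0 by dominated convergence
    have hu0 : Tendsto u atTop (𝓝 0) := by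
      have := tendsto_integral_of_dominated_convergence (μ := P)
        (F := fun t x => g (F1 t x) - g (F2 t x)) (f := fun _ => (0 : ℝ))
        (bound := fun _ => 2 * ‖gb‖)
        (fun t => ((hgint _ (hmF1 t)).sub (hgint _ (hmF2 t))).aestronglyMeasurable)
        (integrable_const _)
        (fun t => Filter.Eventually.of_forall fun x => by
          calc ‖g (F1 t x) - g (F2 t x)‖ ≤ ‖g (F1 t x)‖ + ‖g (F2 t x)‖ := norm_sub_le _ _
          _ ≤ ‖gb‖ + ‖gb‖ := add_le_add (gb.norm_coe_le_norm _) (gb.norm_coe_le_norm _)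
          _ = 2 * ‖gb‖ := by ring)
        ?_
      · simpa using this
      · filter_upwards [hconv] with x hx
        rw [Metric.tendsto_atTop]
        intro ε hε
        have hug : UniformContinuous g := CompactSpace.uniformContinuous_of_continuous hg
        obtain ⟨δ, hδ, hδg⟩ := Metric.uniformContinuous_iff.mp hug ε hε
        obtain ⟨N, hN⟩ := Metric.cauchySeq_iff.mp hx.cauchySeq δ hδ
        refine ⟨N, fun t ht => ?_⟩
        have hd : dist (F1 t x) (F2 t x) < δ := by
          rw [Prod.dist_eq]
          simpa [hF1, hF2, dist_self] using hN t ht (t + 1) (le_trans ht (Nat.le_succ t))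
        have := hδg hd
        simpa [Real.dist_eq] using this
    -- Cesàro average of u tends to 0
    have hc := hu0.comp (tendsto_add_atTop_nat 1)
    have hcesaro := hc.cesaro
    refine hcesaro.congr fun T => ?_
    rw [hint F1 hmF1 g hg T, hint F2 hmF2 g hg T]
    rw [← mul_sub, ← Finset.sum_sub_distrib]
    congr 1
    rw [← Finset.Ico_add_one_right_eq_Icc, Finset.sum_Ico_eq_sum_range]
    refine Finset.sum_congr rfl fun i _ => ?_
    simp only [Function.comp_apply, hu, Nat.add_comm 1 i]
    exact integral_sub (hgint _ (hmF1 _)) (hgint _ (hmF2 _))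
  refine ⟨key, ?_⟩
  intro Tn hTn _ νbar _
  constructor <;> intro h g hg
  · have hd := (key g hg).comp hTn.tendsto_atTop
    simpa using ((h g hg).sub hd)
  · have hd := (key g hg).comp hTn.tendsto_atTop
    simpa using ((h g hg).add hd)
end

section
/- (Proposition 'ball'.) Let d ∈ ℕ, let τ be a finite Borel measure on Euclidean space ℝ^d, and let u : ℝ^d → ℝ be τ-integrable. If ∫ u dτ < ∫ max(u, 0) dτ, then there exist x ∈ ℝ^d and r > 0 such that ∫_{Metric.ball x r} u dτ < 0; moreover x and r can be chosen so that in addition the boundary of the ball is τ-null, i.e. τ(frontier (Metric.ball x r)) = 0. -/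
open MeasureTheory

/-- Proposition "ball": if a `τ`-integrable function `u` on `ℝ^d` satisfies
`∫ u dτ < ∫ max(u,0) dτ` for a finite Borel measure `τ`, then some open ball has strictly
negative `u`-integral, and the ball can moreover be chosen with `τ`-null boundary. -/
theorem exists_ball_neg_integral
    (d : ℕ) (τ : Measure (EuclideanSpace ℝ (Fin d))) [IsFiniteMeasure τ]
    (u : EuclideanSpace ℝ (Fin d) → ℝ) (hu : Integrable u τ)
    (h : (∫ y, u y ∂τ) < ∫ y, max (u y) 0 ∂τ) :
    ∃ (x : EuclideanSpace ℝ (Fin d)) (r : ℝ), 0 < r ∧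
      (∫ y in Metric.ball x r, u y ∂τ) < 0 ∧
      τ (frontier (Metric.ball x r)) = 0 := by
  -- `u` is negative on a non-null set
  have hne : ¬ (∀ᵐ y ∂τ, 0 ≤ u y) := by
    intro hae
    have : (∫ y, u y ∂τ) = ∫ y, max (u y) 0 ∂τ := by
      apply integral_congr_ae
      filter_upwards [hae] with y hy
      simp [max_eq_left hy]
    linarith
  have hfreq : ∃ᵐ y ∂τ, u y < 0 := by
    simpa [not_le] using (Filter.not_eventually.mp hne)
  -- Lebesgue differentiation at some point where `u` is negative
  have hae := (Besicovitch.vitaliFamily τ).ae_tendsto_average hu.locallyIntegrable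
  obtain ⟨x, hx, hxt⟩ := (hfreq.and_eventually hae).exists
  have hxt' : Filter.Tendsto (fun r => ⨍ y in Metric.closedBall x r, u y ∂τ)
      (nhdsWithin 0 (Set.Ioi 0)) (nhds (u x)) :=
    hxt.comp (Besicovitch.tendsto_filterAt τ x)
  have hneg : ∀ᶠ r in nhdsWithin (0:ℝ) (Set.Ioi 0),
      (⨍ y in Metric.closedBall x r, u y ∂τ) < 0 := hxt'.eventually_lt_const hx
  obtain ⟨r0, hr0, H⟩ := (nhdsGT_basis (0:ℝ)).eventually_iff.mp hneg
  -- at most countably many spheres around `x` have positive measure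
  have hcnt : Set.Countable {t : ℝ | 0 < τ {a | dist a x = t}} :=
    Measure.countable_meas_level_set_pos ((continuous_id.dist continuous_const).measurable)
  have hnsub : ¬ (Set.Ioo (0:ℝ) r0 ⊆ {t : ℝ | 0 < τ {a | dist a x = t}}) := by
    intro hsub
    have h1 : volume (Set.Ioo (0:ℝ) r0) = 0 :=
      measure_mono_null hsub (hcnt.measure_zero _)
    simp [Real.volume_Ioo, hr0, ENNReal.ofReal_eq_zero, not_le] at h1
    linarith
  obtain ⟨r, hrI, hrs⟩ := Set.not_subset.mp hnsub
  have hsph : τ (Metric.sphere x r) = 0 := by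
    have : ¬ 0 < τ {a | dist a x = r} := hrs
    simpa [Metric.sphere, not_lt, le_zero_iff] using this
  -- the integral over the closed ball is negative
  have havg := H hrI
  have hInt : (∫ y in Metric.closedBall x r, u y ∂τ) < 0 := by
    by_contra hge
    push_neg at hge
    rw [setAverage_eq, smul_eq_mul] at havg
    have h0 : (0:ℝ) ≤ (τ (Metric.closedBall x r)).toReal⁻¹ := by positivity
    exact absurd havg (not_lt.mpr (mul_nonneg h0 hge))
  -- transfer to the open ball, whose boundary is null
  have hballeq : (∫ y in Metric.ball x r, u y ∂τ)
      = ∫ y in Metric.closedBall x r, u y ∂τ := by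
    apply setIntegral_congr_set
    rw [MeasureTheory.ae_eq_set]
    constructor
    · rw [Set.diff_eq_empty.mpr Metric.ball_subset_closedBall]; simp
    · rw [Metric.closedBall_diff_ball]; exact hsph
  exact ⟨x, r, hrI.1, hballeq ▸ hInt,
    measure_mono_null Metric.frontier_ball_subset_sphere hsph⟩
end

section
/- (Bayesian posterior consistency; the core of the lemma that the agent adequately learns the calibrated information structure.) Almost surely, for every s ∈ S, the posterior probability π_N(s) converges as N → ∞ to π(s) / (Σ_{s' ∈ C} π(s')) if s ∈ C, and to 0 if s ∉ C, where C := { s ∈ S : p s a = p s⋆ a for every a ∈ A } is the set of states observationally equivalent to the true state s⋆. -/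
open MeasureTheory Filter Topology Finset
open scoped Classical

private lemma icc_prod_eq_range {M : Type*} [CommMonoid M] (f : ℕ → M) (N : ℕ) :
    ∏ n ∈ Finset.Icc 1 N, f n = ∏ i ∈ Finset.range N, f (i + 1) := by
  rw [← Finset.Ico_add_one_right_eq_Icc, Finset.prod_Ico_eq_prod_range]
  simp [add_comm]

private lemma icc_sum_eq_range (f : ℕ → ℝ) (N : ℕ) :
    ∑ n ∈ Finset.Icc 1 N, f n = ∑ i ∈ Finset.range N, f (i + 1) := by
  rw [← Finset.Ico_add_one_right_eq_Icc, Finset.sum_Ico_eq_sum_range]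
  simp [add_comm]

private lemma sqrt_mul_lt_half_add {x y : ℝ} (hx : 0 ≤ x) (hy : 0 ≤ y) (hxy : x ≠ y) :
    Real.sqrt (x * y) < (x + y) / 2 := by
  have h1 : Real.sqrt x ^ 2 = x := Real.sq_sqrt hx
  have h2 : Real.sqrt y ^ 2 = y := Real.sq_sqrt hy
  have hne : Real.sqrt x - Real.sqrt y ≠ 0 := by
    intro h
    exact hxy (by rw [← h1, ← h2, sub_eq_zero.mp h])
  have hpos : 0 < (Real.sqrt x - Real.sqrt y) ^ 2 :=
    lt_of_le_of_ne (sq_nonneg _) (Ne.symm (pow_ne_zero 2 hne))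
  rw [Real.sqrt_mul hx]
  nlinarith [Real.sqrt_nonneg x, Real.sqrt_nonneg y]

private lemma sqrt_add_le' {x y : ℝ} (hx : 0 ≤ x) (hy : 0 ≤ y) :
    Real.sqrt (x + y) ≤ Real.sqrt x + Real.sqrt y := by
  have h : x + y ≤ (Real.sqrt x + Real.sqrt y) ^ 2 := by
    have h1 : Real.sqrt x ^ 2 = x := Real.sq_sqrt hx
    have h2 : Real.sqrt y ^ 2 = y := Real.sq_sqrt hy
    nlinarith [Real.sqrt_nonneg x, Real.sqrt_nonneg y]
  calc Real.sqrt (x + y) ≤ Real.sqrt ((Real.sqrt x + Real.sqrt y) ^ 2) := Real.sqrt_le_sqrt h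
    _ = Real.sqrt x + Real.sqrt y := Real.sqrt_sq (by positivity)

private lemma log_le_two_sqrt_sub {x : ℝ} (hx : 0 < x) :
    Real.log x ≤ 2 * (Real.sqrt x - 1) := by
  have h1 : Real.log (Real.sqrt x) ≤ Real.sqrt x - 1 :=
    Real.log_le_sub_one_of_pos (Real.sqrt_pos.mpr hx)
  have h2 : Real.log (Real.sqrt x) = Real.log x / 2 := Real.log_sqrt hx.le
  linarith

/-- Existence of `δ > 0` making the expected log of the `δ`-shifted likelihood ratio negative,
whenever the two distributions differ. -/
private lemma exists_delta {A : Type} [Fintype A] (q r : A → ℝ)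
    (hq : ∀ a, 0 ≤ q a) (hr : ∀ a, 0 ≤ r a)
    (hqs : ∑ a, q a = 1) (hrs : ∑ a, r a = 1)
    (a0 : A) (ha0 : r a0 ≠ q a0) :
    ∃ δ : ℝ, 0 < δ ∧ ∑ a, q a * Real.log (r a / q a + δ) < 0 := by
  set ρ : ℝ := ∑ a, Real.sqrt (r a * q a) with hρdef
  have hρlt : ρ < 1 := by
    have h1 : ρ < ∑ a, (r a + q a) / 2 := by
      refine Finset.sum_lt_sum (fun a _ => ?_) ⟨a0, Finset.mem_univ a0, ?_⟩
      · rcases eq_or_ne (r a) (q a) with h | h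
        · rw [h]
          rw [show q a * q a = q a ^ 2 by ring, Real.sqrt_sq (hq a)]
          linarith [hq a]
        · exact (sqrt_mul_lt_half_add (hr a) (hq a) h).le
      · exact sqrt_mul_lt_half_add (hr a0) (hq a0) ha0
    have h2 : ∑ a, (r a + q a) / 2 = 1 := by
      rw [← Finset.sum_div, Finset.sum_add_distrib, hqs, hrs]; norm_num
    linarith
  have hρ0 : 0 ≤ ρ := Finset.sum_nonneg fun a _ => Real.sqrt_nonneg _
  set ε : ℝ := 1 - ρ with hεdef
  have hε : 0 < ε := by linarith
  refine ⟨(ε / 2) ^ 2, by positivity, ?_⟩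
  have hsd : Real.sqrt ((ε / 2) ^ 2) = ε / 2 := Real.sqrt_sq (by positivity)
  have hterm : ∀ a, q a * Real.log (r a / q a + (ε / 2) ^ 2) ≤
      2 * (Real.sqrt (r a * q a) + q a * (ε / 2) - q a) := by
    intro a
    rcases eq_or_lt_of_le (hq a) with h | h
    · rw [← h]
      simp
    · have hrq : 0 ≤ r a / q a := div_nonneg (hr a) (hq a)
      have hx : (0:ℝ) < r a / q a + (ε / 2) ^ 2 := by positivity
      have h1 : Real.log (r a / q a + (ε / 2) ^ 2) ≤
          2 * (Real.sqrt (r a / q a) + ε / 2 - 1) := by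
        have := log_le_two_sqrt_sub hx
        have h2 := sqrt_add_le' hrq (le_of_lt (by positivity : (0:ℝ) < (ε/2)^2))
        rw [hsd] at h2
        linarith
      have hq2 : q a * Real.sqrt (r a / q a) = Real.sqrt (r a * q a) := by
        rw [show r a * q a = (r a / q a) * q a ^ 2 by field_simp]
        rw [Real.sqrt_mul hrq, Real.sqrt_sq h.le]
        ring
      calc q a * Real.log (r a / q a + (ε / 2) ^ 2)
          ≤ q a * (2 * (Real.sqrt (r a / q a) + ε / 2 - 1)) := by
            exact mul_le_mul_of_nonneg_left h1 h.le
        _ = 2 * (q a * Real.sqrt (r a / q a) + q a * (ε / 2) - q a) := by ring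
        _ = 2 * (Real.sqrt (r a * q a) + q a * (ε / 2) - q a) := by rw [hq2]
  calc ∑ a, q a * Real.log (r a / q a + (ε / 2) ^ 2)
      ≤ ∑ a, 2 * (Real.sqrt (r a * q a) + q a * (ε / 2) - q a) :=
        Finset.sum_le_sum fun a _ => hterm a
    _ = 2 * (ρ + (ε / 2) * (∑ a, q a) - (∑ a, q a)) := by
        rw [← Finset.mul_sum]
        congr 1
        rw [Finset.sum_sub_distrib, Finset.sum_add_distrib, Finset.mul_sum]
        congr 1
        congr 1
        exact Finset.sum_congr rfl fun a _ => by ring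
    _ = 2 * (ρ + ε / 2 - 1) := by rw [hqs]; ring
    _ = -ε := by rw [hεdef]; ring
    _ < 0 := by linarith

/-- Bayesian posterior consistency: with i.i.d. observations drawn from `p sStar`, the posterior
probability of each state `s` converges almost surely to the prior conditioned on the set
`C = {s | ∀ a, p s a = p sStar a}` of states observationally equivalent to the true state
(and to `0` for states outside `C`). -/
theorem bayesian_posterior_consistency
    {S A : Type} [Fintype S] [Fintype A] [Nonempty S] [Nonempty A]
    [MeasurableSpace A] [MeasurableSingletonClass A]
    (p : S → A → ℝ) (hp : ∀ s a, 0 ≤ p s a) (hpsum : ∀ s, ∑ a, p s a = 1)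
    (π : S → ℝ) (hπ : ∀ s, 0 ≤ π s) (hπsum : ∑ s, π s = 1)
    (sStar : S) (hsStar : 0 < π sStar)
    {X : Type*} [MeasurableSpace X] (P : Measure X) [IsProbabilityMeasure P]
    (Xseq : ℕ → X → A) (hmeas : ∀ n, Measurable (Xseq n))
    (hindep : ProbabilityTheory.iIndepFun Xseq P)
    (hdist : ∀ n a, P {x | Xseq n x = a} = ENNReal.ofReal (p sStar a)) :
    ∀ᵐ x ∂P, ∀ s : S,
      Tendsto (fun N : ℕ =>
          (π s * ∏ n ∈ Finset.Icc 1 N, p s (Xseq n x)) /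
            ∑ s', π s' * ∏ n ∈ Finset.Icc 1 N, p s' (Xseq n x))
        atTop
        (𝓝 (if ∀ a, p s a = p sStar a
            then π s / ∑ s', (if ∀ a, p s' a = p sStar a then π s' else 0)
            else 0)) := by
  -- singleton preimages are measurable
  have hms : ∀ n a, MeasurableSet {x | Xseq n x = a} := fun n a =>
    (hmeas n) (measurableSet_singleton a)
  -- almost surely all observations are in the support of `p sStar`
  have hE0 : ∀ᵐ x ∂P, ∀ n, 0 < p sStar (Xseq n x) := by
    rw [ae_all_iff]
    intro n
    rw [ae_iff]
    refine measure_mono_null (t := ⋃ a ∈ {a : A | p sStar a = 0}, {x | Xseq n x = a})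
      (fun x hx => ?_) ?_
    · simp only [Set.mem_setOf_eq, not_lt] at hx
      simp only [Set.mem_iUnion, Set.mem_setOf_eq]
      exact ⟨Xseq n x, le_antisymm hx (hp sStar _), rfl⟩
    · rw [measure_biUnion_null_iff (Set.to_countable _)]
      intro a ha
      rw [hdist n a]
      simp only [Set.mem_setOf_eq] at ha
      simp [ha]
  -- identical distribution of the observations
  have hident : ∀ m n : ℕ, ProbabilityTheory.IdentDistrib (Xseq m) (Xseq n) P P := by
    intro m n
    refine ⟨(hmeas m).aemeasurable, (hmeas n).aemeasurable, ?_⟩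
    refine MeasureTheory.Measure.ext_of_singleton fun a => ?_
    rw [Measure.map_apply (hmeas m) (measurableSet_singleton a),
      Measure.map_apply (hmeas n) (measurableSet_singleton a)]
    show P {x | Xseq m x = a} = P {x | Xseq n x = a}
    rw [hdist m a, hdist n a]
  -- integral of a function of one observation
  have hint_val : ∀ (n : ℕ) (g : A → ℝ),
      ∫ x, g (Xseq n x) ∂P = ∑ a, p sStar a * g a := by
    intro n g
    have hrep : (fun x => g (Xseq n x)) =
        fun x => ∑ a : A, Set.indicator {y | Xseq n y = a} (fun _ => g a) x := by
      funext x
      rw [Finset.sum_eq_single (Xseq n x)]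
      · rw [Set.indicator_of_mem (by exact rfl)]
      · intro a _ ha
        exact Set.indicator_of_notMem (fun h => ha (by exact h.symm ▸ rfl)) _
      · exact fun h => absurd (Finset.mem_univ _) h
    rw [hrep, integral_finset_sum]
    · refine Finset.sum_congr rfl fun a _ => ?_
      rw [integral_indicator_const (g a) (hms n a), measureReal_def, hdist n a,
        ENNReal.toReal_ofReal (hp sStar a), smul_eq_mul]
    · intro a _
      exact (integrable_const (g a)).indicator (hms n a)
  -- integrability of bounded functions of one observation
  have hint : ∀ (n : ℕ) (g : A → ℝ), Integrable (fun x => g (Xseq n x)) P := by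
    intro n g
    refine Integrable.mono' (integrable_const (∑ a, |g a|))
      ((measurable_of_countable g).comp (hmeas n)).aestronglyMeasurable
      (ae_of_all _ fun x => ?_)
    rw [Real.norm_eq_abs]
    exact Finset.single_le_sum (f := fun a => |g a|) (fun a _ => abs_nonneg _)
      (Finset.mem_univ _)
  -- likelihood ratio products vanish for states outside `C`
  have hRs : ∀ s : S, (¬ ∀ a, p s a = p sStar a) → ∀ᵐ x ∂P,
      Tendsto (fun N : ℕ => ∏ n ∈ Finset.Icc 1 N, (p s (Xseq n x) / p sStar (Xseq n x)))
        atTop (𝓝 0) := by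
    intro s hs
    push_neg at hs
    obtain ⟨a0, ha0⟩ := hs
    obtain ⟨δ, hδpos, hδ⟩ := exists_delta (p sStar) (p s) (hp sStar) (hp s)
      (hpsum sStar) (hpsum s) a0 ha0
    set g : A → ℝ := fun a => Real.log (p s a / p sStar a + δ) with hgdef
    set Y : ℕ → X → ℝ := fun i x => g (Xseq (i + 1) x) with hYdef
    have hslln := ProbabilityTheory.strong_law_ae_real (μ := P) Y (hint 1 g)
      (fun i j hij => ((hindep.indepFun (show i + 1 ≠ j + 1 by omega)).comp
        (measurable_of_countable g) (measurable_of_countable g)))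
      (fun i => ((hident (i + 1) 1).comp (measurable_of_countable g)))
    have hμval : (∫ x, Y 0 x ∂P) = ∑ a, p sStar a * g a := hint_val 1 g
    have hμneg : (∫ x, Y 0 x ∂P) < 0 := by rw [hμval]; exact hδ
    filter_upwards [hslln, hE0] with x hx hx0
    -- partial sums of logs tend to -∞
    have hS : Tendsto (fun N : ℕ => ∑ i ∈ Finset.range N, Y i x) atTop atBot := by
      have h1 : Tendsto (fun N : ℕ =>
          (N : ℝ) * ((∑ i ∈ Finset.range N, Y i x) / N)) atTop atBot :=
        Tendsto.atTop_mul_neg hμneg tendsto_natCast_atTop_atTop hx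
      refine h1.congr' ?_
      filter_upwards [eventually_ge_atTop 1] with N hN
      have : (N : ℝ) ≠ 0 := by positivity
      field_simp
    have hexp : Tendsto (fun N : ℕ => Real.exp (∑ i ∈ Finset.range N, Y i x))
        atTop (𝓝 0) := Real.tendsto_exp_atBot.comp hS
    refine tendsto_of_tendsto_of_tendsto_of_le_of_le tendsto_const_nhds hexp
      (fun N => Finset.prod_nonneg fun n _ => div_nonneg (hp s _) (hp sStar _)) ?_
    intro N
    calc ∏ n ∈ Finset.Icc 1 N, (p s (Xseq n x) / p sStar (Xseq n x))
        ≤ ∏ n ∈ Finset.Icc 1 N, Real.exp (g (Xseq n x)) := by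
          refine Finset.prod_le_prod (fun n _ => div_nonneg (hp s _) (hp sStar _))
            (fun n _ => ?_)
          have hpos : 0 < p s (Xseq n x) / p sStar (Xseq n x) + δ := by
            have := div_nonneg (hp s (Xseq n x)) (hp sStar (Xseq n x))
            linarith
          rw [hgdef]
          rw [Real.exp_log hpos]
          linarith
      _ = Real.exp (∑ n ∈ Finset.Icc 1 N, g (Xseq n x)) := by rw [Real.exp_sum]
      _ = Real.exp (∑ i ∈ Finset.range N, Y i x) := by
          rw [icc_sum_eq_range (fun n => g (Xseq n x)) N]
  -- combine all the a.s. events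
  have hAll : ∀ᵐ x ∂P, ∀ s : S, (¬ ∀ a, p s a = p sStar a) →
      Tendsto (fun N : ℕ => ∏ n ∈ Finset.Icc 1 N, (p s (Xseq n x) / p sStar (Xseq n x)))
        atTop (𝓝 0) := by
    rw [ae_all_iff]
    intro s
    by_cases hs : ∀ a, p s a = p sStar a
    · exact ae_of_all _ fun x h => absurd hs h
    · filter_upwards [hRs s hs] with x hx _
      exact hx
  filter_upwards [hE0, hAll] with x h0 hR
  intro s
  -- deterministic limit algebra
  set Z : ℕ → ℝ := fun N => ∏ n ∈ Finset.Icc 1 N, p sStar (Xseq n x) with hZdef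
  have hZ : ∀ N, 0 < Z N := fun N => Finset.prod_pos fun n _ => h0 n
  set R : S → ℕ → ℝ := fun s' N =>
    ∏ n ∈ Finset.Icc 1 N, (p s' (Xseq n x) / p sStar (Xseq n x)) with hRdef
  set F : S → ℕ → ℝ := fun s' N =>
    if ∀ a, p s' a = p sStar a then π s' else π s' * R s' N with hFdef
  have hnum : ∀ s' N, π s' * ∏ n ∈ Finset.Icc 1 N, p s' (Xseq n x) = F s' N * Z N := by
    intro s' N
    simp only [hFdef]
    split_ifs with h
    · have : ∏ n ∈ Finset.Icc 1 N, p s' (Xseq n x) = Z N :=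
        Finset.prod_congr rfl fun n _ => h _
      rw [this]
    · rw [hRdef, hZdef]
      simp only
      rw [Finset.prod_div_distrib, mul_assoc, div_mul_cancel₀ _ (hZ N).ne']
  have hfun : (fun N : ℕ =>
      (π s * ∏ n ∈ Finset.Icc 1 N, p s (Xseq n x)) /
        ∑ s', π s' * ∏ n ∈ Finset.Icc 1 N, p s' (Xseq n x)) =
      fun N : ℕ => F s N / ∑ s', F s' N := by
    funext N
    rw [hnum s N, Finset.sum_congr rfl fun s' _ => hnum s' N, ← Finset.sum_mul,
      mul_div_mul_right _ _ (hZ N).ne']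
  have hFlim : ∀ s', Tendsto (F s') atTop
      (𝓝 (if ∀ a, p s' a = p sStar a then π s' else 0)) := by
    intro s'
    simp only [hFdef]
    by_cases h : ∀ a, p s' a = p sStar a
    · simp only [if_pos h]
      exact tendsto_const_nhds
    · simp only [if_neg h]
      have := (hR s' h).const_mul (π s')
      simpa only [mul_zero] using this
  have hsumlim : Tendsto (fun N => ∑ s', F s' N) atTop
      (𝓝 (∑ s', if ∀ a, p s' a = p sStar a then π s' else 0)) :=
    tendsto_finset_sum _ fun s' _ => hFlim s'
  have hden : 0 < ∑ s', (if ∀ a, p s' a = p sStar a then π s' else 0) := by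
    have h1 : π sStar ≤ ∑ s', (if ∀ a, p s' a = p sStar a then π s' else 0) := by
      have h2 : (if ∀ a, p sStar a = p sStar a then π sStar else 0) = π sStar := by
        rw [if_pos fun a => rfl]
      rw [← h2]
      refine Finset.single_le_sum (f := fun s' =>
        if ∀ a, p s' a = p sStar a then π s' else 0) (fun s' _ => ?_) (Finset.mem_univ sStar)
      split_ifs
      · exact hπ s'
      · exact le_refl 0
    linarith
  have hval : (if ∀ a, p s a = p sStar a
      then π s / ∑ s', (if ∀ a, p s' a = p sStar a then π s' else 0)
      else 0) =
      (if ∀ a, p s a = p sStar a then π s else 0) /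
        ∑ s', (if ∀ a, p s' a = p sStar a then π s' else 0) := by
    split_ifs
    · rfl
    · rw [zero_div]
  rw [hfun, hval]
  exact (hFlim s).div hsumlim hden.ne'
end

section
/- (Proposition on state-dependent type ranking / concavification of a piecewise-convex value function.) Let c ∈ (0,1) and let W : [0,1] → ℝ be continuous, convex on [0,c] and convex on [c,1]. For x ∈ [0,1] define V(x) as the supremum of ∫ W dτ over Borel probability measures τ on [0,1] with mean ∫ t dτ(t) = x. Then: (i) if (1−c)·W(0) + c·W(1) ≥ W(c) (full transparency is optimal), V(x) = (1−x)·W(0) + x·W(1) for every x ∈ [0,1]; (ii) if (1−c)·W(0) + c·W(1) < W(c), then V(x) = ((c−x)·W(0) + x·W(c))/c for x ∈ [0,c] (split between 0 and c) and V(x) = ((1−x)·W(c) + (x−c)·W(1))/(1−c) for x ∈ [c,1] (split between c and 1). In particular, if W(c) > max(W(0), W(1)) then case (ii) applies and V(x) > (1−x)·W(0) + x·W(1) for every x ∈ (0,1), so full transparency is not optimal. -/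
open MeasureTheory

/-- The concavified value `V x`: the supremum of `∫ W dτ` over Borel probability measures `τ`
supported on `[0,1]` with mean `x`. -/
noncomputable def concavifiedValue (W : ℝ → ℝ) (x : ℝ) : ℝ :=
  sSup {v : ℝ | ∃ τ : Measure ℝ, IsProbabilityMeasure τ ∧ τ (Set.Icc 0 1) = 1 ∧
    (∫ t, t ∂τ) = x ∧ v = ∫ t in Set.Icc (0 : ℝ) 1, W t ∂τ}

lemma integrable_dirac'' {f : ℝ → ℝ} {p : ℝ} : Integrable f (Measure.dirac p) := by
  refine (integrable_const (f p)).congr ?_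
  rw [Filter.EventuallyEq, MeasureTheory.ae_dirac_eq]
  exact Filter.eventually_pure.2 rfl

lemma integral_two_point (f : ℝ → ℝ) (p q a : ℝ) (ha0 : 0 ≤ a) (ha1 : a ≤ 1) :
    ∫ t, f t ∂(ENNReal.ofReal a • Measure.dirac p + ENNReal.ofReal (1 - a) • Measure.dirac q)
      = a * f p + (1 - a) * f q := by
  rw [integral_add_measure (integrable_dirac''.smul_measure ENNReal.ofReal_ne_top)
      (integrable_dirac''.smul_measure ENNReal.ofReal_ne_top),
    integral_smul_measure, integral_smul_measure, integral_dirac, integral_dirac,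
    ENNReal.toReal_ofReal ha0, ENNReal.toReal_ofReal (by linarith)]
  simp [smul_eq_mul]

/-- Key lemma: if `g` is concave and continuous on `[0,1]`, dominates `W` there, and the value
`g x` is achieved by a two-point measure, then `concavifiedValue W x = g x`. -/
lemma concavifiedValue_eq (W g : ℝ → ℝ) (x : ℝ)
    (hWcont : ContinuousOn W (Set.Icc 0 1))
    (hg : ConcaveOn ℝ (Set.Icc 0 1) g) (hgc : ContinuousOn g (Set.Icc 0 1))
    (hWg : ∀ t ∈ Set.Icc (0:ℝ) 1, W t ≤ g t)
    (p q a : ℝ) (hp : p ∈ Set.Icc (0:ℝ) 1) (hq : q ∈ Set.Icc (0:ℝ) 1)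
    (ha0 : 0 ≤ a) (ha1 : a ≤ 1) (hx : a * p + (1-a) * q = x)
    (hval : a * W p + (1-a) * W q = g x) :
    concavifiedValue W x = g x := by
  have hub : ∀ v ∈ {v : ℝ | ∃ τ : Measure ℝ, IsProbabilityMeasure τ ∧ τ (Set.Icc 0 1) = 1 ∧
      (∫ t, t ∂τ) = x ∧ v = ∫ t in Set.Icc (0 : ℝ) 1, W t ∂τ}, v ≤ g x := by
    rintro v ⟨τ, hτ, hτ1, hmean, rfl⟩
    have hae : ∀ᵐ t ∂τ, t ∈ Set.Icc (0:ℝ) 1 := by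
      rw [ae_iff]
      have h0 : τ (Set.Icc (0:ℝ) 1)ᶜ = 0 := by
        rw [measure_compl measurableSet_Icc (measure_ne_top τ _), hτ1, measure_univ, tsub_self]
      exact h0
    have hres : τ.restrict (Set.Icc (0:ℝ) 1) = τ := Measure.restrict_eq_self_of_ae_mem hae
    have hWi : Integrable W τ := by
      have := (hWcont.integrableOn_compact isCompact_Icc (μ := τ))
      rwa [IntegrableOn, hres] at this
    have hgi : Integrable g τ := by
      have := (hgc.integrableOn_compact isCompact_Icc (μ := τ))
      rwa [IntegrableOn, hres] at this
    have hid : Integrable (fun t : ℝ => t) τ := by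
      have := ((continuousOn_id (s := Set.Icc (0:ℝ) 1)).integrableOn_compact isCompact_Icc (μ := τ))
      rwa [IntegrableOn, hres] at this
    rw [hres]
    calc ∫ t, W t ∂τ ≤ ∫ t, g t ∂τ :=
          integral_mono_ae hWi hgi (hae.mono fun t ht => hWg t ht)
      _ ≤ g x := by
          rw [← hmean]
          exact hg.le_map_integral hgc isClosed_Icc hae hid hgi
  have hmem : g x ∈ {v : ℝ | ∃ τ : Measure ℝ, IsProbabilityMeasure τ ∧ τ (Set.Icc 0 1) = 1 ∧
      (∫ t, t ∂τ) = x ∧ v = ∫ t in Set.Icc (0 : ℝ) 1, W t ∂τ} := by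
    refine ⟨ENNReal.ofReal a • Measure.dirac p + ENNReal.ofReal (1 - a) • Measure.dirac q,
      ?_, ?_, ?_, ?_⟩
    · constructor
      simp only [Measure.add_apply, Measure.smul_apply, smul_eq_mul, measure_univ, mul_one]
      rw [← ENNReal.ofReal_add ha0 (by linarith), add_sub_cancel, ENNReal.ofReal_one]
    · simp only [Measure.add_apply, Measure.smul_apply, smul_eq_mul,
        Measure.dirac_apply_of_mem hp, Measure.dirac_apply_of_mem hq, mul_one]
      rw [← ENNReal.ofReal_add ha0 (by linarith), add_sub_cancel, ENNReal.ofReal_one]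
    · rw [integral_two_point _ p q a ha0 ha1]; exact hx
    · have hres : (ENNReal.ofReal a • Measure.dirac p +
          ENNReal.ofReal (1 - a) • Measure.dirac q).restrict (Set.Icc (0:ℝ) 1) =
          ENNReal.ofReal a • Measure.dirac p + ENNReal.ofReal (1 - a) • Measure.dirac q := by
        apply Measure.restrict_eq_self_of_ae_mem
        rw [ae_iff]
        simp only [Measure.add_apply, Measure.smul_apply, smul_eq_mul, Measure.dirac_apply]
        rw [Set.indicator_of_notMem (by simpa using hp), Set.indicator_of_notMem
          (by simpa using hq), mul_zero, mul_zero, add_zero]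
      rw [hres, integral_two_point _ p q a ha0 ha1]
      exact hval.symm
  exact le_antisymm (csSup_le ⟨g x, hmem⟩ hub) (le_csSup ⟨g x, hub⟩ hmem)

lemma chord_le {f : ℝ → ℝ} {u v : ℝ} (huv : u < v) (hf : ConvexOn ℝ (Set.Icc u v) f)
    {t : ℝ} (ht : t ∈ Set.Icc u v) :
    f t ≤ ((v - t) * f u + (t - u) * f v) / (v - u) := by
  have hvu : (0:ℝ) < v - u := by linarith
  have h := hf.2 (Set.left_mem_Icc.2 huv.le) (Set.right_mem_Icc.2 huv.le)
    (show (0:ℝ) ≤ (v - t)/(v - u) from div_nonneg (by linarith [ht.2]) hvu.le)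
    (show (0:ℝ) ≤ (t - u)/(v - u) from div_nonneg (by linarith [ht.1]) hvu.le)
    (show (v - t)/(v - u) + (t - u)/(v - u) = 1 from by field_simp; ring)
  simp only [smul_eq_mul] at h
  have harg : (v - t)/(v - u) * u + (t - u)/(v - u) * v = t := by field_simp; try ring
  rw [harg] at h
  calc f t ≤ (v - t)/(v - u) * f u + (t - u)/(v - u) * f v := h
    _ = ((v - t) * f u + (t - u) * f v) / (v - u) := by field_simp; try ring

lemma concaveOn_affine' (m b : ℝ) (s : Set ℝ) (hs : Convex ℝ s) :
    ConcaveOn ℝ s (fun x : ℝ => m * x + b) := by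
  refine ⟨hs, fun x _ y _ p q hp hq hpq => ?_⟩
  simp only [smul_eq_mul]
  exact le_of_eq (by linear_combination b * hpq)

/-- Proposition on state-dependent type ranking: concavification of a continuous value function
that is convex on `[0,c]` and on `[c,1]`. If `(1-c)·W 0 + c·W 1 ≥ W c`, full transparency is
optimal; otherwise the optimal split is between `0` and `c` (resp. `c` and `1`). In particular,
if `W c > max (W 0) (W 1)` then full transparency is not optimal. -/
theorem concavification_piecewise_convex
    (c : ℝ) (hc : c ∈ Set.Ioo (0 : ℝ) 1)
    (W : ℝ → ℝ) (hWcont : ContinuousOn W (Set.Icc 0 1))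
    (hWconv₁ : ConvexOn ℝ (Set.Icc 0 c) W)
    (hWconv₂ : ConvexOn ℝ (Set.Icc c 1) W) :
    ((1 - c) * W 0 + c * W 1 ≥ W c →
      ∀ x ∈ Set.Icc (0 : ℝ) 1, concavifiedValue W x = (1 - x) * W 0 + x * W 1) ∧
    ((1 - c) * W 0 + c * W 1 < W c →
      (∀ x ∈ Set.Icc (0 : ℝ) c,
        concavifiedValue W x = ((c - x) * W 0 + x * W c) / c) ∧
      (∀ x ∈ Set.Icc c (1 : ℝ),
        concavifiedValue W x = ((1 - x) * W c + (x - c) * W 1) / (1 - c))) ∧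
    (W c > max (W 0) (W 1) →
      ∀ x ∈ Set.Ioo (0 : ℝ) 1, concavifiedValue W x > (1 - x) * W 0 + x * W 1) := by
  obtain ⟨hc0, hc1⟩ := hc
  have hc1' : (0:ℝ) < 1 - c := by linarith
  -- chord bounds for W on the two pieces
  have hchord₁ : ∀ t ∈ Set.Icc (0:ℝ) c, W t ≤ ((c - t) * W 0 + t * W c) / c := by
    intro t ht
    have := chord_le hc0 hWconv₁ ht
    simpa using this
  have hchord₂ : ∀ t ∈ Set.Icc c (1:ℝ), W t ≤ ((1 - t) * W c + (t - c) * W 1) / (1 - c) := by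
    intro t ht
    exact chord_le hc1 hWconv₂ ht
  have part2 : (1 - c) * W 0 + c * W 1 < W c →
      (∀ x ∈ Set.Icc (0 : ℝ) c,
        concavifiedValue W x = ((c - x) * W 0 + x * W c) / c) ∧
      (∀ x ∈ Set.Icc c (1 : ℝ),
        concavifiedValue W x = ((1 - x) * W c + (x - c) * W 1) / (1 - c)) := by
    intro hcase
    set L1 : ℝ → ℝ := fun t => (W c - W 0)/c * t + W 0 with hL1def
    set L2 : ℝ → ℝ := fun t => (W 1 - W c)/(1-c) * t + (W c - (W 1 - W c)/(1-c) * c) with hL2def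
    have hdiff : ∀ t : ℝ, L1 t * (c * (1-c)) - L2 t * (c * (1-c)) =
        (t - c) * (W c - ((1-c) * W 0 + c * W 1)) := by
      intro t
      simp only [hL1def, hL2def]
      field_simp
      ring
    have hs : (0:ℝ) < W c - ((1-c) * W 0 + c * W 1) := by linarith
    have hL12 : ∀ t : ℝ, t ≤ c → L1 t ≤ L2 t := by
      intro t htc
      nlinarith [hdiff t, mul_pos hc0 hc1',
        mul_nonpos_of_nonpos_of_nonneg (by linarith : t - c ≤ 0) hs.le]
    have hL21 : ∀ t : ℝ, c ≤ t → L2 t ≤ L1 t := by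
      intro t htc
      nlinarith [hdiff t, mul_pos hc0 hc1',
        mul_nonneg (by linarith : (0:ℝ) ≤ t - c) hs.le]
    set g : ℝ → ℝ := fun t => min (L1 t) (L2 t) with hgdef
    have hgL1 : ∀ t : ℝ, t ≤ c → g t = L1 t := fun t ht => min_eq_left (hL12 t ht)
    have hgL2 : ∀ t : ℝ, c ≤ t → g t = L2 t := fun t ht => min_eq_right (hL21 t ht)
    have hL1eq : ∀ t : ℝ, L1 t = ((c - t) * W 0 + t * W c) / c := by
      intro t; simp only [hL1def]; field_simp; ring
    have hL2eq : ∀ t : ℝ, L2 t = ((1 - t) * W c + (t - c) * W 1) / (1 - c) := by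
      intro t; simp only [hL2def]; field_simp; ring
    have hg : ConcaveOn ℝ (Set.Icc (0:ℝ) 1) g :=
      (concaveOn_affine' _ _ _ (convex_Icc _ _)).inf (concaveOn_affine' _ _ _ (convex_Icc _ _))
    have hgc : ContinuousOn g (Set.Icc (0:ℝ) 1) :=
      (((continuous_const.mul continuous_id).add continuous_const).min
        ((continuous_const.mul continuous_id).add continuous_const)).continuousOn
    have hWg : ∀ t ∈ Set.Icc (0:ℝ) 1, W t ≤ g t := by
      intro t ht
      rcases le_total t c with h | h
      · rw [hgL1 t h, hL1eq]
        exact hchord₁ t ⟨ht.1, h⟩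
      · rw [hgL2 t h, hL2eq]
        exact hchord₂ t ⟨h, ht.2⟩
    constructor
    · intro x hx
      have hkey : concavifiedValue W x = g x := by
        apply concavifiedValue_eq W g x hWcont hg hgc hWg 0 c ((c - x)/c)
          (Set.mem_Icc.2 ⟨le_refl 0, zero_le_one⟩) (Set.mem_Icc.2 ⟨hc0.le, hc1.le⟩)
          (div_nonneg (by linarith [hx.2]) hc0.le)
          ((div_le_one hc0).2 (by linarith [hx.1]))
        · field_simp
          ring
        · rw [hgL1 x hx.2, hL1eq]
          field_simp
          try ring
      rw [hkey, hgL1 x hx.2, hL1eq]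
    · intro x hx
      have hkey : concavifiedValue W x = g x := by
        apply concavifiedValue_eq W g x hWcont hg hgc hWg c 1 ((1 - x)/(1-c))
          (Set.mem_Icc.2 ⟨hc0.le, hc1.le⟩) (Set.mem_Icc.2 ⟨zero_le_one, le_refl 1⟩)
          (div_nonneg (by linarith [hx.2]) hc1'.le)
          ((div_le_one hc1').2 (by linarith [hx.1]))
        · field_simp
          ring
        · rw [hgL2 x hx.1, hL2eq]
          field_simp
          try ring
      rw [hkey, hgL2 x hx.1, hL2eq]
  refine ⟨?_, part2, ?_⟩
  · intro hcase x hx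
    set g : ℝ → ℝ := fun t => (W 1 - W 0) * t + W 0 with hgdef
    have hWg : ∀ t ∈ Set.Icc (0:ℝ) 1, W t ≤ g t := by
      intro t ht
      rcases le_total t c with h | h
      · have h1 := hchord₁ t ⟨ht.1, h⟩
        have h2 : ((c - t) * W 0 + t * W c) / c ≤ g t := by
          rw [div_le_iff₀ hc0]
          simp only [hgdef]
          nlinarith [mul_nonneg ht.1 (by linarith : (0:ℝ) ≤ (1-c) * W 0 + c * W 1 - W c)]
        exact h1.trans h2
      · have h1 := hchord₂ t ⟨h, ht.2⟩
        have h2 : ((1 - t) * W c + (t - c) * W 1) / (1 - c) ≤ g t := by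
          rw [div_le_iff₀ hc1']
          simp only [hgdef]
          nlinarith [mul_nonneg (by linarith [ht.2] : (0:ℝ) ≤ 1 - t)
            (by linarith : (0:ℝ) ≤ (1-c) * W 0 + c * W 1 - W c)]
        exact h1.trans h2
    have hkey : concavifiedValue W x = g x := by
      apply concavifiedValue_eq W g x hWcont
        (concaveOn_affine' _ _ _ (convex_Icc _ _))
        (((continuous_const.mul continuous_id).add continuous_const).continuousOn)
        hWg 0 1 (1 - x)
        (Set.mem_Icc.2 ⟨le_refl 0, zero_le_one⟩) (Set.mem_Icc.2 ⟨zero_le_one, le_refl 1⟩)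
        (by linarith [hx.2]) (by linarith [hx.1])
      · ring
      · simp only [hgdef]; ring
    rw [hkey]; simp only [hgdef]; ring
  · intro hmax x hx
    have h0 := le_max_left (W 0) (W 1)
    have h1 := le_max_right (W 0) (W 1)
    have hcase : (1 - c) * W 0 + c * W 1 < W c := by nlinarith
    have hs : (0:ℝ) < W c - ((1-c) * W 0 + c * W 1) := by linarith
    rcases le_total x c with h | h
    · rw [(part2 hcase).1 x ⟨hx.1.le, h⟩, gt_iff_lt, lt_div_iff₀ hc0]
      nlinarith [mul_pos hx.1 hs]
    · rw [(part2 hcase).2 x ⟨h, hx.2.le⟩, gt_iff_lt, lt_div_iff₀ hc1']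
      nlinarith [mul_pos (by linarith [hx.2] : (0:ℝ) < 1 - x) hs]
end

section
/- (Undetectable deviations are undetectable: in a dynamic direct mechanism, a reporting strategy whose report distribution aggregates to the type distribution after every reported history induces the same joint distribution over the state and the report–allocation history as truthtelling; the key step in the necessity proof of Theorem 3.) Suppose the reporting strategy σ is undetectable, i.e. for every period t ∈ {1,…,T}, every reported history ĥ ∈ (Θ × A)^{t−1}, and every θ' ∈ Θ: Σ_θ f(θ) · σ_t(ĥ, θ, θ') = f(θ'). Then for every state ω ∈ Ω and every report–allocation path (θ'_1, a_1, …, θ'_T, a_T) ∈ (Θ × A)^T: Σ over all true-type paths (θ_1, …, θ_T) ∈ Θ^T of P_σ(ω, (θ_t, θ'_t, a_t)_{t=1}^{T}) equals μ0(ω) · ∏_{t=1}^{T} f(θ'_t) · φ_t(ω, ĥ_t, θ'_t, a_t), where ĥ_t := ((θ'_1, a_1), …, (θ'_{t−1}, a_{t−1})); in other words, the marginal of P_σ over states and report–allocation paths coincides with the path distribution under truthful reporting. -/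
open Finset

/-- The reported history before period `t`: the reports and allocations of periods `< t`. -/
def reportedHistory {Θ A : Type} {T : ℕ} (rep : Fin T → Θ) (alloc : Fin T → A)
    (t : Fin T) : Fin t → Θ × A :=
  fun s => (rep (Fin.castLE t.isLt.le s), alloc (Fin.castLE t.isLt.le s))

/-- Undetectable deviations are undetectable: in a `T`-horizon dynamic direct mechanism, if a
reporting strategy `σ` aggregates the type distribution `f` into itself after every reported
history (an undetectable deviation), then summing the induced path probability
`P_σ(ω, (θ_t, θ'_t, a_t)_t) = μ0 ω · ∏_t f(θ_t) σ_t(hh_t, θ_t, θ'_t) φ_t(ω, hh_t, θ'_t, a_t)`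
over all true-type paths yields exactly the state–report–allocation path distribution under
truthful reporting, `μ0 ω · ∏_t f(θ'_t) φ_t(ω, hh_t, θ'_t, a_t)`. -/
theorem undetectable_deviation_same_report_distribution
    {Θ A Ω : Type} [Fintype Θ] [Fintype A] [Fintype Ω]
    [Nonempty Θ] [Nonempty A] [Nonempty Ω]
    (μ0 : Ω → ℝ) (hμ0 : ∀ ω, 0 ≤ μ0 ω) (hμ0sum : ∑ ω, μ0 ω = 1)
    (f : Θ → ℝ) (hf : ∀ θ, 0 ≤ f θ) (hfsum : ∑ θ, f θ = 1)
    (T : ℕ)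
    (φ : ∀ t : Fin T, Ω → (Fin t → Θ × A) → Θ → A → ℝ)
    (hφ0 : ∀ t ω hh θ' a, 0 ≤ φ t ω hh θ' a)
    (hφ1 : ∀ t ω hh θ', ∑ a, φ t ω hh θ' a = 1)
    (σ : ∀ t : Fin T, (Fin t → Θ × A) → Θ → Θ → ℝ)
    (hσ0 : ∀ t hh θ θ', 0 ≤ σ t hh θ θ')
    (hσ1 : ∀ t hh θ, ∑ θ', σ t hh θ θ' = 1)
    (hundet : ∀ t hh θ', ∑ θ, f θ * σ t hh θ θ' = f θ') :
    ∀ (ω : Ω) (rep : Fin T → Θ) (alloc : Fin T → A),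
      (∑ θpath : Fin T → Θ,
          μ0 ω * ∏ t : Fin T,
            f (θpath t) * σ t (reportedHistory rep alloc t) (θpath t) (rep t) *
              φ t ω (reportedHistory rep alloc t) (rep t) (alloc t))
        = μ0 ω * ∏ t : Fin T,
            f (rep t) * φ t ω (reportedHistory rep alloc t) (rep t) (alloc t) := by
  intro ω rep alloc
  rw [← Finset.mul_sum]
  congr 1
  have : ∀ θpath : Fin T → Θ,
      (∏ t : Fin T, f (θpath t) * σ t (reportedHistory rep alloc t) (θpath t) (rep t) *
        φ t ω (reportedHistory rep alloc t) (rep t) (alloc t))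
      = (∏ t : Fin T, f (θpath t) * σ t (reportedHistory rep alloc t) (θpath t) (rep t)) *
        ∏ t, φ t ω (reportedHistory rep alloc t) (rep t) (alloc t) := by
    intro θpath; rw [← Finset.prod_mul_distrib]
  simp_rw [this]
  rw [← Finset.sum_mul,
    show (∑ i : Fin T → Θ, ∏ t : Fin T,
        f (i t) * σ t (reportedHistory rep alloc t) (i t) (rep t))
      = ∏ t : Fin T, ∑ θ, f θ * σ t (reportedHistory rep alloc t) θ (rep t) from
      (Fintype.prod_sum (κ := fun _ : Fin T => Θ)
        (fun t θ => f θ * σ t (reportedHistory rep alloc t) θ (rep t))).symm]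
  simp_rw [hundet]
  rw [← Finset.prod_mul_distrib]
end
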